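/- arXiv:2503.12529 — 2 statements merged into one kernel-verified Lean document; each statement's English description precedes it below -/
import Mathlib

section
/- Let α, β > −1 and a ∈ ℝ∖{0}. Let ℓ^{(α)}, ℓ^{(β)} be the monic Laguerre orthogonal polynomial sequences, and for n ≥ 0 define the 2×2 matrix polynomial Qₙ(x) = [[ℓₙ^{(α)}(x), a(ℓₙ₊₁^{(β)}(x) − x·ℓₙ^{(α)}(x))], [−a·n·(Γ(n+β+1)/Γ(n+α))·ℓₙ₋₁^{(α)}(x), a²·n·(Γ(n+β+1)/Γ(n+α))·x·ℓₙ₋₁^{(α)}(x) + ℓₙ^{(β)}(x)]] (for n = 0 the terms with factor n vanish). Then for all n ≥ 0 and all x: x·Qₙ''(x) + Qₙ'(x)·[[α+1−x, a·x·(2+β−α)], [0, β+1−x]] + Qₙ(x)·[[0, a(β+1)], [0, 1]] = [[−n, 0], [0, −n+1]]·Qₙ(x). (Qₙ is the sequence of orthogonal polynomials for the weight W(x) = e^{−x}[[x^{α}+a²x^{β+2}, ax^{β+1}],[ax^{β+1}, x^{β}]] on (0,∞).) -/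
open MeasureTheory Matrix Polynomial Set Filter

noncomputable section

/-- The 2×2 Laguerre-type matrix orthogonal polynomials built from the monic
Laguerre polynomials `ℓ^{(α)}` and `ℓ^{(β)}` (for `n = 0` the terms with factor `n`
vanish). -/
lemma integrable_poly_weight (α : ℝ) (hα : -1 < α) (P : Polynomial ℝ) :
    IntegrableOn (fun x => P.eval x * (Real.exp (-x) * x ^ α)) (Set.Ioi (0:ℝ)) := by
  have key : ∀ k : ℕ, IntegrableOn (fun x : ℝ => x ^ k * (Real.exp (-x) * x ^ α)) (Set.Ioi (0:ℝ)) := by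
    intro k
    have h0 : (0:ℝ) < (k : ℝ) + α + 1 := by
      have : (0:ℝ) ≤ (k:ℝ) := Nat.cast_nonneg k
      linarith
    have h := Real.GammaIntegral_convergent h0
    apply h.congr_fun ?_ measurableSet_Ioi
    intro x hx
    have hx' : (0:ℝ) < x := hx
    simp only [show (k:ℝ) + α + 1 - 1 = (k:ℝ) + α by ring, Real.rpow_add hx', Real.rpow_natCast]
    ring
  have : (fun x => P.eval x * (Real.exp (-x) * x ^ α))
      = fun x : ℝ => ∑ k ∈ Finset.range (P.natDegree + 1),
          P.coeff k * (x ^ k * (Real.exp (-x) * x ^ α)) := by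
    funext x
    rw [Polynomial.eval_eq_sum_range, Finset.sum_mul]
    simp [mul_assoc]
  rw [this]
  exact integrable_finset_sum _ fun k _ => (key k).const_mul _

lemma poly_eq_zero_of_integral_sq (α : ℝ) (hα : -1 < α) (p : Polynomial ℝ)
    (h : ∫ x in Set.Ioi (0:ℝ), (p * p).eval x * (Real.exp (-x) * x ^ α) = 0) :
    p = 0 := by
  by_contra hp
  have hnn : 0 ≤ᵐ[volume.restrict (Set.Ioi (0:ℝ))]
      fun x : ℝ => (p * p).eval x * (Real.exp (-x) * x ^ α) := by
    rw [Filter.EventuallyLE, ae_restrict_iff' measurableSet_Ioi]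
    filter_upwards with x hx
    have hxpos : (0:ℝ) < x := hx
    simp only [Polynomial.eval_mul, Pi.zero_apply]
    have : (0:ℝ) ≤ Real.exp (-x) * x ^ α := by positivity
    nlinarith [sq_nonneg (p.eval x)]
  have h0 : (fun x : ℝ => (p * p).eval x * (Real.exp (-x) * x ^ α))
      =ᵐ[volume.restrict (Set.Ioi 0)] 0 :=
    (MeasureTheory.integral_eq_zero_iff_of_nonneg_ae hnn
      (integrable_poly_weight α hα (p * p))).mp h
  have h1 : ∀ᵐ x ∂(volume.restrict (Set.Ioi (0:ℝ))), p.eval x = 0 := by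
    filter_upwards [h0, ae_restrict_mem measurableSet_Ioi] with x hx hxmem
    have hxpos : (0:ℝ) < x := hxmem
    have hw : (0:ℝ) < Real.exp (-x) * x ^ α := by positivity
    have hx2 : (p * p).eval x * (Real.exp (-x) * x ^ α) = 0 := hx
    simp only [Polynomial.eval_mul, Pi.zero_apply] at hx2
    have h2 : p.eval x * p.eval x = 0 := by
      rcases mul_eq_zero.mp hx2 with h3 | h3
      · exact h3
      · exact absurd h3 (ne_of_gt hw)
    exact mul_self_eq_zero.mp h2
  have hmeas : MeasurableSet {x : ℝ | p.eval x ≠ 0} :=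
    ((Polynomial.continuous p).measurable (measurableSet_singleton (0:ℝ)).compl)
  have hzero : volume ({x : ℝ | p.eval x ≠ 0} ∩ Set.Ioi 0) = 0 := by
    have := ae_iff.mp h1
    rw [Measure.restrict_apply₀' measurableSet_Ioi.nullMeasurableSet] at this
    simpa using this
  have hroots : volume {x : ℝ | p.eval x = 0} = 0 :=
    (Polynomial.finite_setOf_isRoot hp).measure_zero volume
  have : volume (Set.Ioi (0:ℝ)) ≤ 0 := by
    calc volume (Set.Ioi (0:ℝ))
        ≤ volume ({x : ℝ | p.eval x = 0} ∪ {x : ℝ | p.eval x ≠ 0} ∩ Set.Ioi 0) := by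
          apply measure_mono
          intro x hx
          by_cases hx0 : p.eval x = 0
          · exact Or.inl hx0
          · exact Or.inr ⟨hx0, hx⟩
      _ ≤ volume {x : ℝ | p.eval x = 0} + volume ({x : ℝ | p.eval x ≠ 0} ∩ Set.Ioi 0) :=
          measure_union_le _ _
      _ = 0 := by rw [hroots, hzero, add_zero]
  simp [Real.volume_Ioi] at this

lemma orth_lower (α : ℝ) (hα : -1 < α) (ℓ : ℕ → Polynomial ℝ)
    (hm : ∀ n, (ℓ n).Monic) (hd : ∀ n, (ℓ n).natDegree = n)
    (ho : ∀ n m : ℕ, n ≠ m →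
      ∫ x in Set.Ioi (0:ℝ), (ℓ n).eval x * (ℓ m).eval x * (Real.exp (-x) * x ^ α) = 0)
    (n : ℕ) :
    ∀ d : ℕ, d < n → ∀ q : Polynomial ℝ, q.natDegree ≤ d →
      ∫ x in Set.Ioi (0:ℝ), (ℓ n).eval x * q.eval x * (Real.exp (-x) * x ^ α) = 0 := by
  intro d
  induction d with
  | zero =>
    intro hn q hq
    have hq0 : q = Polynomial.C (q.coeff 0) := Polynomial.eq_C_of_natDegree_le_zero hq
    have hl0 : ℓ 0 = 1 := (Polynomial.Monic.natDegree_eq_zero (hm 0)).mp (hd 0)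
    have hfun : (fun x => (ℓ n).eval x * q.eval x * (Real.exp (-x) * x ^ α))
        = fun x => q.coeff 0 * ((ℓ n).eval x * (ℓ 0).eval x * (Real.exp (-x) * x ^ α)) := by
      funext x
      rw [hl0]
      conv_lhs => rw [hq0]
      simp
      ring
    rw [hfun, MeasureTheory.integral_const_mul, ho n 0 (by omega), mul_zero]
  | succ d ih =>
    intro hn q hq
    set c := q.coeff (d + 1) with hc
    set r := q - Polynomial.C c * ℓ (d + 1) with hr
    have hrd : r.natDegree ≤ d := by
      rw [Polynomial.natDegree_le_iff_coeff_eq_zero]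
      intro m hm'
      rcases eq_or_lt_of_le (Nat.succ_le_of_lt hm') with hmd | hmd
      · simp only [hr, Polynomial.coeff_sub, Polynomial.coeff_C_mul, ← hmd]
        have : (ℓ (d+1)).coeff (d+1) = 1 := by
          have := (hm (d+1)).coeff_natDegree
          rwa [hd (d+1)] at this
        rw [this, hc, mul_one, sub_self]
      · have h1 : q.coeff m = 0 :=
          Polynomial.coeff_eq_zero_of_natDegree_lt (lt_of_le_of_lt hq hmd)
        have h2 : (ℓ (d+1)).coeff m = 0 := by
          apply Polynomial.coeff_eq_zero_of_natDegree_lt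
          rw [hd (d+1)]; exact hmd
        simp [hr, h1, h2]
    have hsplit : (fun x => (ℓ n).eval x * q.eval x * (Real.exp (-x) * x ^ α))
        = fun x => c * ((ℓ n).eval x * (ℓ (d+1)).eval x * (Real.exp (-x) * x ^ α))
            + (ℓ n).eval x * r.eval x * (Real.exp (-x) * x ^ α) := by
      funext x
      have : q = Polynomial.C c * ℓ (d + 1) + r := by rw [hr]; ring
      rw [this]
      simp
      ring
    rw [hsplit, MeasureTheory.integral_add]
    · rw [MeasureTheory.integral_const_mul, ho n (d+1) (by omega),
        ih (by omega) r hrd, mul_zero, add_zero]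
    · apply Integrable.const_mul
      have := integrable_poly_weight α hα (ℓ n * ℓ (d+1))
      simpa [Polynomial.eval_mul, mul_assoc, IntegrableOn] using this
    · have := integrable_poly_weight α hα (ℓ n * r)
      simpa [Polynomial.eval_mul, mul_assoc, IntegrableOn] using this

-- limit at infinity of exp(-x) * x^(α+1) * P(x)
lemma tendsto_weight_poly_atTop (α : ℝ) (P : Polynomial ℝ) :
    Tendsto (fun x : ℝ => Real.exp (-x) * x ^ (α + 1) * P.eval x) atTop (nhds 0) := by
  have key : Tendsto (fun x : ℝ => ∑ k ∈ Finset.range (P.natDegree + 1),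
      P.coeff k * (x ^ ((k : ℝ) + α + 1) * Real.exp (-1 * x))) atTop (nhds 0) := by
    have : Tendsto (fun x : ℝ => ∑ k ∈ Finset.range (P.natDegree + 1),
        P.coeff k * (x ^ ((k : ℝ) + α + 1) * Real.exp (-1 * x))) atTop
        (nhds (∑ k ∈ Finset.range (P.natDegree + 1), P.coeff k * 0)) := by
      apply tendsto_finset_sum
      intro k _
      exact (tendsto_rpow_mul_exp_neg_mul_atTop_nhds_zero ((k : ℝ) + α + 1) 1
        one_pos).const_mul _
    simpa using this
  apply key.congr'
  filter_upwards [eventually_gt_atTop (0:ℝ)] with x hx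
  rw [Polynomial.eval_eq_sum_range, Finset.mul_sum]
  apply Finset.sum_congr rfl
  intro k _
  rw [show (k:ℝ) + α + 1 = (α + 1) + (k:ℝ) by ring, Real.rpow_add hx, Real.rpow_natCast]
  rw [show (-1 : ℝ) * x = -x by ring]
  ring

lemma ibp_weight (α : ℝ) (hα : -1 < α) (f g : Polynomial ℝ) :
    ∫ x in Set.Ioi (0:ℝ),
      (X * derivative (derivative f) + (Polynomial.C (α+1) - X) * derivative f).eval x
        * g.eval x * (Real.exp (-x) * x ^ α)
    = - ∫ x in Set.Ioi (0:ℝ),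
        (X * derivative f * derivative g).eval x * (Real.exp (-x) * x ^ α) := by
  set P : Polynomial ℝ := derivative f * g with hP
  set F : ℝ → ℝ := fun x => Real.exp (-x) * x ^ (α + 1) * P.eval x with hF
  set Q : Polynomial ℝ := (Polynomial.C (α+1) - X) * P + X * derivative P with hQ
  have hderiv : ∀ x ∈ Set.Ioi (0:ℝ), HasDerivAt F (Q.eval x * (Real.exp (-x) * x ^ α)) x := by
    intro x hx
    have hxpos : (0:ℝ) < x := hx
    have h1 : HasDerivAt (fun y : ℝ => Real.exp (-y)) (-Real.exp (-x)) x := by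
      simpa using (hasDerivAt_neg x).exp
    have h2 : HasDerivAt (fun y : ℝ => y ^ (α + 1)) ((α + 1) * x ^ α) x := by
      have := Real.hasDerivAt_rpow_const (x := x) (p := α + 1) (Or.inl hxpos.ne')
      simpa using this
    have h3 : HasDerivAt (fun y : ℝ => P.eval y) ((derivative P).eval x) x :=
      P.hasDerivAt x
    have h12 := h1.mul h2
    have h := h12.mul h3
    refine h.congr_deriv ?_
    have hxrw : x ^ (α + 1) = x ^ α * x := by
      rw [Real.rpow_add_one hxpos.ne']
    simp only [hQ, Polynomial.eval_add, Polynomial.eval_mul, Polynomial.eval_sub,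
      Polynomial.eval_C, Polynomial.eval_X, Pi.mul_apply]
    rw [hxrw]
    ring
  have hint : IntegrableOn (fun x => Q.eval x * (Real.exp (-x) * x ^ α)) (Set.Ioi (0:ℝ)) :=
    integrable_poly_weight α hα Q
  have htop : Tendsto F atTop (nhds 0) := tendsto_weight_poly_atTop α P
  have hcont : ContinuousWithinAt F (Set.Ici (0:ℝ)) 0 := by
    apply ContinuousAt.continuousWithinAt
    apply ContinuousAt.mul
    apply ContinuousAt.mul
    · exact (Real.continuous_exp.comp continuous_neg).continuousAt
    · exact Real.continuousAt_rpow_const 0 (α + 1) (Or.inr (by linarith))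
    · exact (P.continuous_aeval).continuousAt
  have hF0 : F 0 = 0 := by
    simp [hF, Real.zero_rpow (by linarith : α + 1 ≠ 0)]
  have hFTC := MeasureTheory.integral_Ioi_of_hasDerivAt_of_tendsto hcont hderiv hint htop
  rw [hF0, sub_zero] at hFTC
  -- hFTC : ∫ x in Ioi 0, Q.eval x * w = 0
  have hsplit : (fun x => Q.eval x * (Real.exp (-x) * x ^ α))
      = fun x => (X * derivative (derivative f) + (Polynomial.C (α+1) - X) * derivative f).eval x
          * g.eval x * (Real.exp (-x) * x ^ α)
        + (X * derivative f * derivative g).eval x * (Real.exp (-x) * x ^ α) := by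
    funext x
    simp only [hQ, hP, Polynomial.derivative_mul, Polynomial.eval_add, Polynomial.eval_mul,
      Polynomial.eval_sub, Polynomial.eval_C, Polynomial.eval_X]
    ring
  rw [hsplit] at hFTC
  rw [MeasureTheory.integral_add] at hFTC
  · linarith
  · have := integrable_poly_weight α hα
      ((X * derivative (derivative f) + (Polynomial.C (α+1) - X) * derivative f) * g)
    simpa [Polynomial.eval_mul, mul_assoc, IntegrableOn] using this
  · exact integrable_poly_weight α hα (X * derivative f * derivative g)

lemma coeff_Lop (α : ℝ) (p : Polynomial ℝ) (j : ℕ) :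
    (X * derivative (derivative p) + (Polynomial.C (α+1) - X) * derivative p).coeff (j+1)
    = p.coeff (j+2) * (j+2) * (j+1) + (α+1) * (p.coeff (j+2) * (j+2))
      - p.coeff (j+1) * (j+1) := by
  rw [Polynomial.coeff_add, Polynomial.coeff_X_mul, sub_mul, Polynomial.coeff_sub,
    Polynomial.coeff_C_mul, Polynomial.coeff_X_mul, Polynomial.coeff_derivative,
    Polynomial.coeff_derivative, Polynomial.coeff_derivative]
  push_cast
  ring

lemma natDegree_Lop_le (α : ℝ) (p : Polynomial ℝ) :
    (X * derivative (derivative p) + (Polynomial.C (α+1) - X) * derivative p).natDegree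
      ≤ p.natDegree := by
  rw [Polynomial.natDegree_le_iff_coeff_eq_zero]
  intro m hm
  obtain ⟨j, rfl⟩ : ∃ j, m = j + 1 := ⟨m - 1, by omega⟩
  rw [coeff_Lop]
  rw [Polynomial.coeff_eq_zero_of_natDegree_lt (by omega : p.natDegree < j + 2),
    Polynomial.coeff_eq_zero_of_natDegree_lt (by omega : p.natDegree < j + 1)]
  ring

lemma lag_ode (α : ℝ) (hα : -1 < α) (ℓ : ℕ → Polynomial ℝ)
    (hm : ∀ n, (ℓ n).Monic) (hd : ∀ n, (ℓ n).natDegree = n)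
    (ho : ∀ n m : ℕ, n ≠ m →
      ∫ x in Set.Ioi (0:ℝ), (ℓ n).eval x * (ℓ m).eval x * (Real.exp (-x) * x ^ α) = 0)
    (n : ℕ) :
    X * derivative (derivative (ℓ n)) + (Polynomial.C (α+1) - X) * derivative (ℓ n)
      = Polynomial.C (-(n:ℝ)) * ℓ n := by
  rcases Nat.eq_zero_or_pos n with rfl | hn
  · have hl0 : ℓ 0 = 1 := (Polynomial.Monic.natDegree_eq_zero (hm 0)).mp (hd 0)
    simp [hl0]
  set q : Polynomial ℝ := (X * derivative (derivative (ℓ n))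
      + (Polynomial.C (α+1) - X) * derivative (ℓ n)) + Polynomial.C (n:ℝ) * ℓ n with hq
  suffices hq0 : q = 0 by
    have : Polynomial.C (-(n:ℝ)) * ℓ n = - (Polynomial.C (n:ℝ) * ℓ n) := by
      rw [map_neg]; ring
    rw [this, ← sub_eq_zero]
    rw [hq] at hq0
    linear_combination hq0
  -- degree of q is < n
  have hqdeg : q.natDegree ≤ n - 1 := by
    rw [Polynomial.natDegree_le_iff_coeff_eq_zero]
    intro m hmgt
    have hm1 : n ≤ m := by omega
    obtain ⟨j, rfl⟩ : ∃ j, m = j + 1 := ⟨m - 1, by omega⟩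
    rw [hq, Polynomial.coeff_add, coeff_Lop, Polynomial.coeff_C_mul]
    rcases eq_or_lt_of_le hm1 with heq | hlt
    · -- j + 1 = n
      subst heq
      have h2 : (ℓ (j+1)).coeff (j+2) = 0 :=
        Polynomial.coeff_eq_zero_of_natDegree_lt (by rw [hd]; omega)
      have h1 : (ℓ (j+1)).coeff (j+1) = 1 := by
        have := (hm (j+1)).coeff_natDegree
        rwa [hd] at this
      rw [h1, h2]
      push_cast
      ring
    · have h2 : (ℓ n).coeff (j+2) = 0 :=
        Polynomial.coeff_eq_zero_of_natDegree_lt (by rw [hd n]; omega)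
      have h1 : (ℓ n).coeff (j+1) = 0 :=
        Polynomial.coeff_eq_zero_of_natDegree_lt (by rw [hd n]; omega)
      rw [h1, h2]
      ring
  apply poly_eq_zero_of_integral_sq α hα
  -- split the integral
  have hLq : (X * derivative (derivative q)
      + (Polynomial.C (α+1) - X) * derivative q).natDegree ≤ n - 1 :=
    le_trans (natDegree_Lop_le α q) hqdeg
  have hsplit : (fun x => (q * q).eval x * (Real.exp (-x) * x ^ α))
      = fun x => (X * derivative (derivative (ℓ n))
            + (Polynomial.C (α+1) - X) * derivative (ℓ n)).eval x * q.eval x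
              * (Real.exp (-x) * x ^ α)
          + (n:ℝ) * ((ℓ n).eval x * q.eval x * (Real.exp (-x) * x ^ α)) := by
    funext x
    rw [hq]
    simp only [Polynomial.eval_add, Polynomial.eval_mul, Polynomial.eval_sub,
      Polynomial.eval_C, Polynomial.eval_X]
    ring
  rw [hsplit, MeasureTheory.integral_add]
  · have e1 : ∫ x in Set.Ioi (0:ℝ),
        (X * derivative (derivative (ℓ n))
          + (Polynomial.C (α+1) - X) * derivative (ℓ n)).eval x * q.eval x
            * (Real.exp (-x) * x ^ α) = 0 := by
      rw [ibp_weight α hα (ℓ n) q]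
      have h2 := ibp_weight α hα q (ℓ n)
      have hcomm : X * derivative q * derivative (ℓ n) = X * derivative (ℓ n) * derivative q := by
        ring
      rw [hcomm] at h2
      rw [← h2]
      have : (fun x => (X * derivative (derivative q)
            + (Polynomial.C (α+1) - X) * derivative q).eval x * (ℓ n).eval x
              * (Real.exp (-x) * x ^ α))
          = fun x => (ℓ n).eval x * (X * derivative (derivative q)
            + (Polynomial.C (α+1) - X) * derivative q).eval x * (Real.exp (-x) * x ^ α) := by
        funext x; ring
      rw [this]
      exact orth_lower α hα ℓ hm hd ho n (n-1) (by omega) _ hLq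
    rw [e1, MeasureTheory.integral_const_mul,
      orth_lower α hα ℓ hm hd ho n (n-1) (by omega) q hqdeg, mul_zero, add_zero]
  · have := integrable_poly_weight α hα
      ((X * derivative (derivative (ℓ n)) + (Polynomial.C (α+1) - X) * derivative (ℓ n)) * q)
    simpa [Polynomial.eval_mul, mul_assoc, IntegrableOn] using this
  · apply Integrable.const_mul
    have := integrable_poly_weight α hα (ℓ n * q)
    simpa [Polynomial.eval_mul, mul_assoc, IntegrableOn] using this


def QLag (α β a : ℝ) (ℓa ℓb : ℕ → Polynomial ℝ) (n : ℕ) (x : ℝ) :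
    Matrix (Fin 2) (Fin 2) ℝ :=
  !![(ℓa n).eval x,
     a * ((ℓb (n + 1)).eval x - x * (ℓa n).eval x);
     -(a * (n : ℝ) * (Real.Gamma ((n : ℝ) + β + 1) / Real.Gamma ((n : ℝ) + α)) *
        (ℓa (n - 1)).eval x),
     a ^ 2 * (n : ℝ) * (Real.Gamma ((n : ℝ) + β + 1) / Real.Gamma ((n : ℝ) + α)) *
        x * (ℓa (n - 1)).eval x + (ℓb n).eval x]

/-- The 2×2 Laguerre-type polynomials `Qₙ` are eigenfunctions of the second-order
differential operator
`D = ∂² x I + ∂ [[α+1−x, ax(2+β−α)], [0, β+1−x]] + [[0, a(β+1)], [0, 1]]`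
with eigenvalue `diag(−n, −n+1)`. -/
theorem QLag_eigenfunction
    (α β : ℝ) (hα : -1 < α) (hβ : -1 < β) (a : ℝ) (ha : a ≠ 0)
    (ℓa ℓb : ℕ → Polynomial ℝ)
    (hamonic : ∀ n, (ℓa n).Monic) (hadeg : ∀ n, (ℓa n).natDegree = n)
    (haorth : ∀ n m : ℕ, n ≠ m →
      ∫ x in Set.Ioi (0 : ℝ),
        (ℓa n).eval x * (ℓa m).eval x * (Real.exp (-x) * x ^ α) = 0)
    (hbmonic : ∀ n, (ℓb n).Monic) (hbdeg : ∀ n, (ℓb n).natDegree = n)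
    (hborth : ∀ n m : ℕ, n ≠ m →
      ∫ x in Set.Ioi (0 : ℝ),
        (ℓb n).eval x * (ℓb m).eval x * (Real.exp (-x) * x ^ β) = 0) :
    ∀ (n : ℕ) (x : ℝ),
      x • (Matrix.of fun i j : Fin 2 =>
          deriv (fun y => deriv (fun z => QLag α β a ℓa ℓb n z i j) y) x)
      + (Matrix.of fun i j : Fin 2 =>
          deriv (fun y => QLag α β a ℓa ℓb n y i j) x) *
          !![α + 1 - x, a * x * (2 + β - α); 0, β + 1 - x]
      + QLag α β a ℓa ℓb n x * !![0, a * (β + 1); 0, 1]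
      = !![-(n : ℝ), 0; 0, -(n : ℝ) + 1] * QLag α β a ℓa ℓb n x := by
  intro n x
  have odeA : ∀ m : ℕ, ∀ y : ℝ,
      y * (derivative (derivative (ℓa m))).eval y + (α+1-y) * (derivative (ℓa m)).eval y
        = -(m:ℝ) * (ℓa m).eval y := by
    intro m y
    have := congrArg (Polynomial.eval y) (lag_ode α hα ℓa hamonic hadeg haorth m)
    simp only [Polynomial.eval_add, Polynomial.eval_mul, Polynomial.eval_sub,
      Polynomial.eval_C, Polynomial.eval_X] at this
    linear_combination this
  have odeB : ∀ m : ℕ, ∀ y : ℝ,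
      y * (derivative (derivative (ℓb m))).eval y + (β+1-y) * (derivative (ℓb m)).eval y
        = -(m:ℝ) * (ℓb m).eval y := by
    intro m y
    have := congrArg (Polynomial.eval y) (lag_ode β hβ ℓb hbmonic hbdeg hborth m)
    simp only [Polynomial.eval_add, Polynomial.eval_mul, Polynomial.eval_sub,
      Polynomial.eval_C, Polynomial.eval_X] at this
    linear_combination this
  have odeM : (n:ℝ) * (x * (derivative (derivative (ℓa (n-1)))).eval x
      + (α+1-x) * (derivative (ℓa (n-1))).eval x
      + ((n:ℝ)-1) * (ℓa (n-1)).eval x) = 0 := by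
    rcases n with _ | k
    · simp
    · have h := odeA k x
      simp only [Nat.add_sub_cancel]
      push_cast
      linear_combination ((k:ℝ)+1) * h
  obtain ⟨γ, hγ⟩ : ∃ c : ℝ, Real.Gamma ((n : ℝ) + β + 1) / Real.Gamma ((n : ℝ) + α) = c :=
    ⟨_, rfl⟩
  have hQ : ∀ z : ℝ, QLag α β a ℓa ℓb n z
      = !![(ℓa n).eval z, (Polynomial.C a * (ℓb (n+1) - X * ℓa n)).eval z;
           (Polynomial.C (-(a * (n:ℝ) * γ)) * ℓa (n-1)).eval z,
           (Polynomial.C (a^2 * (n:ℝ) * γ) * (X * ℓa (n-1)) + ℓb n).eval z] := by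
    intro z
    unfold QLag
    rw [← hγ]
    ext i j
    fin_cases i <;> fin_cases j <;> simp <;> ring
  have hA := odeA n x
  have hBn := odeB n x
  have hBp := odeB (n+1) x
  push_cast at hBp
  ext i j
  fin_cases i <;> fin_cases j <;>
    simp only [hQ, Matrix.add_apply, Matrix.smul_apply, Matrix.mul_apply,
      Fin.sum_univ_two, Matrix.of_apply, Fin.mk_zero, Fin.mk_one, Matrix.cons_val',
      Matrix.cons_val_zero, Matrix.cons_val_one, Matrix.head_cons, Matrix.head_fin_const,
      Matrix.empty_val', Matrix.cons_val_fin_one, smul_eq_mul, Fin.isValue] <;>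
    simp only [Polynomial.deriv] <;>
    simp only [Polynomial.derivative_mul, Polynomial.derivative_add,
      Polynomial.derivative_sub, Polynomial.derivative_C, Polynomial.derivative_X,
      Polynomial.eval_add, Polynomial.eval_sub, Polynomial.eval_mul, Polynomial.eval_C,
      Polynomial.eval_X, Polynomial.eval_one, one_mul, zero_mul, mul_zero, zero_add, add_zero,
      zero_sub, mul_one] <;> push_cast
  · linear_combination hA
  · linear_combination a * hBp - a * x * hA
  · linear_combination (-(a*γ)) * odeM
  · linear_combination a^2*γ*x*odeM + hBn

end
end

section
/- Let b, c ∈ ℝ and a ∈ ℝ∖{0}. Let h be the monic Hermite polynomials and for n ≥ 0 define the 2×2 matrix polynomial Qₙ(x) = [[hₙ(x−b), a(hₙ₊₁(x−c) − x·hₙ(x−b))], [−a·(n/2)·e^{c²−b²}·hₙ₋₁(x−b), a²·(n/2)·e^{c²−b²}·x·hₙ₋₁(x−b) + hₙ(x−c)]] (for n = 0 the terms with factor n vanish). Then for all n ≥ 0 and all x: Qₙ''(x) + Qₙ'(x)·[[−2x+2b, 2ax(c−b)+2a], [0, −2x+2c]] + Qₙ(x)·[[−2, 2ac], [0, 0]]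 = [[−2n−2, 0], [0, −2n]]·Qₙ(x). (Qₙ is the sequence of orthogonal polynomials for the weight W(x) = e^{−x²}[[e^{2bx}+a²x²e^{2cx}, axe^{2cx}],[axe^{2cx}, e^{2cx}]] on ℝ.) -/
open MeasureTheory Matrix Polynomial

noncomputable section

/-- The 2×2 Hermite-type matrix orthogonal polynomials built from the monic Hermite
polynomials `h` and shifts `b, c` (for `n = 0` the terms with factor `n` vanish). -/
def QHer (b c a : ℝ) (h : ℕ → Polynomial ℝ) (n : ℕ) (x : ℝ) :
    Matrix (Fin 2) (Fin 2) ℝ :=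
  !![(h n).eval (x - b),
     a * ((h (n + 1)).eval (x - c) - x * (h n).eval (x - b));
     -(a * ((n : ℝ) / 2) * Real.exp (c ^ 2 - b ^ 2) * (h (n - 1)).eval (x - b)),
     a ^ 2 * ((n : ℝ) / 2) * Real.exp (c ^ 2 - b ^ 2) * x * (h (n - 1)).eval (x - b)
       + (h n).eval (x - c)]

section Aux
open Filter Real intervalIntegral


lemma gauss_integrable (P : Polynomial ℝ) :
    Integrable fun x : ℝ => P.eval x * Real.exp (-x ^ 2) := by
  have base : ∀ i : ℕ, Integrable fun x : ℝ => x ^ i * Real.exp (-x ^ 2) := by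
    intro i
    have := integrable_rpow_mul_exp_neg_mul_sq (b := 1) one_pos
      (s := (i : ℝ)) (lt_of_lt_of_le neg_one_lt_zero (Nat.cast_nonneg i))
    simpa [Real.rpow_natCast] using this
  have : (fun x : ℝ => P.eval x * Real.exp (-x ^ 2))
      = fun x => ∑ i ∈ Finset.range (P.natDegree + 1),
          P.coeff i * (x ^ i * Real.exp (-x ^ 2)) := by
    funext x
    rw [Polynomial.eval_eq_sum_range, Finset.sum_mul]
    simp [mul_assoc]
  rw [this]
  exact integrable_finset_sum _ fun i _ => (base i).const_mul _

lemma gauss_tendsto_atTop (P : Polynomial ℝ) :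
    Tendsto (fun x : ℝ => P.eval x * Real.exp (-x ^ 2)) atTop (nhds 0) := by
  have base : ∀ i : ℕ, Tendsto (fun x : ℝ => x ^ i * Real.exp (-x ^ 2)) atTop (nhds 0) := by
    intro i
    apply squeeze_zero' (g := fun x : ℝ => x ^ i * Real.exp (-x))
    · filter_upwards [eventually_ge_atTop (0:ℝ)] with x hx
      positivity
    · filter_upwards [eventually_ge_atTop (1:ℝ)] with x hx
      have h1 : -x ^ 2 ≤ -x := by nlinarith
      have := Real.exp_le_exp.2 h1
      nlinarith [pow_nonneg (by linarith : (0:ℝ) ≤ x) i, Real.exp_pos (-x^2), Real.exp_pos (-x)]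
    · exact tendsto_pow_mul_exp_neg_atTop_nhds_zero i
  have : (fun x : ℝ => P.eval x * Real.exp (-x ^ 2))
      = fun x => ∑ i ∈ Finset.range (P.natDegree + 1),
          P.coeff i * (x ^ i * Real.exp (-x ^ 2)) := by
    funext x
    rw [Polynomial.eval_eq_sum_range, Finset.sum_mul]
    simp [mul_assoc]
  rw [this]
  have : Tendsto (fun x : ℝ => ∑ i ∈ Finset.range (P.natDegree + 1),
      P.coeff i * (x ^ i * Real.exp (-x ^ 2))) atTop
      (nhds (∑ i ∈ Finset.range (P.natDegree + 1), P.coeff i * 0)) :=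
    tendsto_finset_sum _ fun i _ => (base i).const_mul _
  simpa using this

lemma gauss_tendsto_atBot (P : Polynomial ℝ) :
    Tendsto (fun x : ℝ => P.eval x * Real.exp (-x ^ 2)) atBot (nhds 0) := by
  have := (gauss_tendsto_atTop (P.comp (-X))).comp tendsto_neg_atBot_atTop
  convert this using 2 with x
  simp [Function.comp, eval_comp]


def gint (P : Polynomial ℝ) : ℝ := ∫ x : ℝ, P.eval x * Real.exp (-x ^ 2)

lemma gint_zero : gint 0 = 0 := by simp [gint]

lemma gint_sq_pos (P : Polynomial ℝ) (hP : P ≠ 0) : 0 < gint (P * P) := by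
  unfold gint
  have hnn : 0 ≤ᵐ[volume] fun x : ℝ => (P * P).eval x * Real.exp (-x ^ 2) := by
    filter_upwards with x
    simp only [Pi.zero_apply]
    rw [eval_mul]
    have := Real.exp_pos (-x ^ 2)
    nlinarith [mul_self_nonneg (P.eval x)]
  rw [integral_pos_iff_support_of_nonneg_ae hnn (gauss_integrable _)]
  have hsupp : Function.support (fun x : ℝ => (P * P).eval x * Real.exp (-x ^ 2))
      = {x : ℝ | P.IsRoot x}ᶜ := by
    ext x
    simp only [Function.mem_support, Set.mem_compl_iff, Set.mem_setOf_eq, IsRoot, eval_mul]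
    constructor
    · intro hx hx'; exact hx (by rw [hx']; ring)
    · intro hx
      have := Real.exp_pos (-x ^ 2)
      intro hc
      rcases mul_eq_zero.1 hc with h' | h'
      · exact hx (by rcases mul_self_eq_zero.1 h' with h''; exact h'')
      · linarith
  rw [hsupp]
  have hfin : ({x : ℝ | P.IsRoot x}).Finite := P.finite_setOf_isRoot hP
  by_contra hle
  push_neg at hle
  have h0 : volume ({x : ℝ | P.IsRoot x}ᶜ) = 0 := le_antisymm hle zero_le
  have : volume (Set.univ : Set ℝ) ≤ volume {x : ℝ | P.IsRoot x} + volume ({x : ℝ | P.IsRoot x}ᶜ) := by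
    rw [← Set.union_compl_self {x : ℝ | P.IsRoot x}]
    exact measure_union_le _ _
  rw [Real.volume_univ, h0, add_zero, hfin.measure_zero] at this
  simp at this




lemma gint_add (P Q : Polynomial ℝ) : gint (P + Q) = gint P + gint Q := by
  unfold gint
  simp only [eval_add, add_mul]
  exact integral_add (gauss_integrable P) (gauss_integrable Q)

lemma gint_sub (P Q : Polynomial ℝ) : gint (P - Q) = gint P - gint Q := by
  unfold gint
  simp only [eval_sub, sub_mul]
  exact integral_sub (gauss_integrable P) (gauss_integrable Q)

lemma gint_Cmul (r : ℝ) (P : Polynomial ℝ) : gint (C r * P) = r * gint P := by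
  unfold gint
  simp only [eval_mul, eval_C, mul_assoc]
  exact MeasureTheory.integral_const_mul r _

lemma gauss_hasDerivAt (P : Polynomial ℝ) (x : ℝ) :
    HasDerivAt (fun x : ℝ => P.eval x * Real.exp (-x ^ 2))
      ((derivative P - C 2 * (X * P)).eval x * Real.exp (-x ^ 2)) x := by
  have h1 : HasDerivAt (fun x : ℝ => Real.exp (-x ^ 2)) (Real.exp (-x ^ 2) * -(2 * x)) x := by
    have : HasDerivAt (fun x : ℝ => -x ^ 2) (-(2 * x)) x := by
      have h2 : HasDerivAt (fun x : ℝ => -x ^ 2) _ x := (hasDerivAt_pow 2 x).neg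
      simpa using h2
    exact this.exp
  have this : HasDerivAt (fun x : ℝ => P.eval x * Real.exp (-x ^ 2)) _ x := (P.hasDerivAt x).mul h1
  convert this using 1
  simp [eval_sub, eval_mul]
  ring

lemma gint_ibp (P : Polynomial ℝ) : gint (derivative P) = gint (C 2 * (X * P)) := by
  have key : gint (derivative P - C 2 * (X * P)) = 0 := by
    set Q := derivative P - C 2 * (X * P) with hQ
    have hlim : Tendsto (fun R : ℝ => ∫ x in (-R)..R, Q.eval x * Real.exp (-x ^ 2))
        atTop (nhds (gint Q)) :=
      intervalIntegral_tendsto_integral (gauss_integrable Q) tendsto_neg_atTop_atBot tendsto_id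
    have heq : ∀ R : ℝ, (∫ x in (-R)..R, Q.eval x * Real.exp (-x ^ 2))
        = P.eval R * Real.exp (-R ^ 2) - P.eval (-R) * Real.exp (-(-R) ^ 2) := by
      intro R
      exact integral_eq_sub_of_hasDerivAt (fun x _ => gauss_hasDerivAt P x)
        ((gauss_integrable Q).intervalIntegrable)
    have hlim2 : Tendsto (fun R : ℝ => ∫ x in (-R)..R, Q.eval x * Real.exp (-x ^ 2))
        atTop (nhds 0) := by
      simp only [heq]
      have h2 := (gauss_tendsto_atBot P).comp tendsto_neg_atTop_atBot
      simpa using (gauss_tendsto_atTop P).sub h2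
    exact tendsto_nhds_unique hlim hlim2
  have := gint_sub (derivative P) (C 2 * (X * P))
  linarith [key, this]



variable {h : ℕ → Polynomial ℝ}

lemma coeff_h_hi (hdeg : ∀ n, (h n).natDegree = n) {k m : ℕ} (hkm : k < m) :
    (h k).coeff m = 0 :=
  coeff_eq_zero_of_natDegree_lt (by rw [hdeg]; exact hkm)

lemma coeff_h_self (hmonic : ∀ n, (h n).Monic) (hdeg : ∀ n, (h n).natDegree = n) (k : ℕ) :
    (h k).coeff k = 1 := by
  have := (hmonic k).coeff_natDegree
  rwa [hdeg] at this

lemma step_degree (hmonic : ∀ n, (h n).Monic) (hdeg : ∀ n, (h n).natDegree = n)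
    (p : Polynomial ℝ) (N : ℕ) (hp : p.degree < ((N+1 : ℕ) : WithBot ℕ)) :
    (p - C (p.coeff N) * h N).degree < (N : WithBot ℕ) := by
  rw [degree_lt_iff_coeff_zero]
  intro m hm
  rw [coeff_sub, coeff_C_mul]
  rcases eq_or_lt_of_le hm with heq | hlt
  · rw [← heq, coeff_h_self hmonic hdeg, mul_one, sub_self]
  · rw [(degree_lt_iff_coeff_zero p (N+1)).1 hp m (by exact_mod_cast hlt),
      coeff_h_hi hdeg hlt, mul_zero, sub_zero]

lemma orth_lowdeg (hmonic : ∀ n, (h n).Monic) (hdeg : ∀ n, (h n).natDegree = n)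
    (horthI : ∀ n m : ℕ, n ≠ m → gint (h n * h m) = 0) :
    ∀ N : ℕ, ∀ p : Polynomial ℝ, p.degree < (N : WithBot ℕ) →
    ∀ m, N ≤ m → gint (h m * p) = 0 := by
  intro N
  induction N with
  | zero =>
    intro p hp m _
    have : p = 0 := by
      ext i
      exact (degree_lt_iff_coeff_zero p 0).1 (by exact_mod_cast hp) i (Nat.zero_le i)
    rw [this, mul_zero, gint_zero]
  | succ N ih =>
    intro p hp m hm
    have hq := step_degree hmonic hdeg p N (by exact_mod_cast hp)
    have e : h m * p = h m * (p - C (p.coeff N) * h N) + C (p.coeff N) * (h m * h N) := by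
      ring
    rw [e, gint_add, gint_Cmul, ih _ hq m (by omega), horthI m N (by omega), mul_zero, add_zero]

lemma eq_zero_of_orth (hmonic : ∀ n, (h n).Monic) (hdeg : ∀ n, (h n).natDegree = n)
    (horthI : ∀ n m : ℕ, n ≠ m → gint (h n * h m) = 0) :
    ∀ N : ℕ, ∀ p : Polynomial ℝ, p.degree < (N : WithBot ℕ) →
    (∀ k, k < N → gint (h k * p) = 0) → p = 0 := by
  intro N
  induction N with
  | zero =>
    intro p hp _
    ext i
    exact (degree_lt_iff_coeff_zero p 0).1 (by exact_mod_cast hp) i (Nat.zero_le i)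
  | succ N ih =>
    intro p hp hk
    have hq := step_degree hmonic hdeg p N (by exact_mod_cast hp)
    have hq0 : p - C (p.coeff N) * h N = 0 := by
      apply ih _ hq
      intro k hkN
      have e : h k * (p - C (p.coeff N) * h N)
          = h k * p - C (p.coeff N) * (h k * h N) := by ring
      rw [e, gint_sub, gint_Cmul, hk k (by omega), horthI k N (by omega), mul_zero, sub_zero]
    have hpe : p = C (p.coeff N) * h N := sub_eq_zero.1 hq0
    have h0 : gint (h N * p) = 0 := hk N (by omega)
    rw [hpe] at h0
    have e2 : h N * (C (p.coeff N) * h N) = C (p.coeff N) * (h N * h N) := by ring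
    rw [e2, gint_Cmul] at h0
    have hpos := gint_sq_pos (h N) (hmonic N).ne_zero
    have hc : p.coeff N = 0 := by
      rcases mul_eq_zero.1 h0 with h' | h'
      · exact h'
      · exact absurd h' (ne_of_gt hpos)
    rw [hpe, hc, map_zero, zero_mul]

lemma hermite_ode (hmonic : ∀ n, (h n).Monic) (hdeg : ∀ n, (h n).natDegree = n)
    (horthI : ∀ n m : ℕ, n ≠ m → gint (h n * h m) = 0) (n : ℕ) :
    derivative (derivative (h n)) = C 2 * (X * derivative (h n)) - C (2 * (n : ℝ)) * h n := by
  set R := derivative (derivative (h n)) - C 2 * (X * derivative (h n)) + C (2 * (n : ℝ)) * h n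
    with hR
  have hXd : ∀ (k m : ℕ), k < m → (X * derivative (h k)).coeff m = 0 := by
    intro k m hkm
    rcases m with _ | m'
    · exact coeff_X_mul_zero _
    · rw [coeff_X_mul, coeff_derivative, coeff_h_hi hdeg (by omega), zero_mul]
  have hXdself : ∀ k : ℕ, (X * derivative (h k)).coeff k = (k : ℝ) := by
    intro k
    rcases k with _ | k'
    · simp
    · rw [coeff_X_mul, coeff_derivative, coeff_h_self hmonic hdeg]
      push_cast; ring
  have hd2 : ∀ (k m : ℕ), k ≤ m + 1 → (derivative (derivative (h k))).coeff m = 0 := by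
    intro k m hkm
    rw [coeff_derivative, coeff_derivative, coeff_h_hi hdeg (by omega), zero_mul, zero_mul]
  have hRdeg : R.degree < (n : WithBot ℕ) := by
    rw [degree_lt_iff_coeff_zero]
    intro m hm
    simp only [hR, coeff_add, coeff_sub, coeff_C_mul]
    rw [hd2 n m (by omega)]
    rcases eq_or_lt_of_le hm with heq | hlt
    · rw [← heq, hXdself, coeff_h_self hmonic hdeg]
      ring
    · rw [hXd n m hlt, coeff_h_hi hdeg hlt]
      ring
  have horthR : ∀ k, k < n → gint (h k * R) = 0 := by
    intro k hkn
    have e1 : h k * R = (derivative (derivative (h n)) * h k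
        - C 2 * (X * (derivative (h n) * h k))) + C (2 * (n : ℝ)) * (h k * h n) := by
      rw [hR]; ring
    have ibp1 : gint (derivative (derivative (h n)) * h k)
        + gint (derivative (h n) * derivative (h k))
        = gint (C 2 * (X * (derivative (h n) * h k))) := by
      have := gint_ibp (derivative (h n) * h k)
      rwa [derivative_mul, gint_add] at this
    have ibp2 : gint (derivative (h n) * derivative (h k))
        + gint (h n * derivative (derivative (h k)))
        = gint (C 2 * (X * (h n * derivative (h k)))) := by
      have := gint_ibp (h n * derivative (h k))
      rwa [derivative_mul, gint_add] at this
    have hdeg2 : (derivative (derivative (h k)) - C 2 * (X * derivative (h k))).degree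
        < (n : WithBot ℕ) := by
      rw [degree_lt_iff_coeff_zero]
      intro m hm
      rw [coeff_sub, coeff_C_mul, hd2 k m (by omega), hXd k m (by omega), mul_zero, sub_zero]
    have orth2 : gint (h n * derivative (derivative (h k)))
        - gint (C 2 * (X * (h n * derivative (h k)))) = 0 := by
      have h3 := orth_lowdeg hmonic hdeg horthI n _ hdeg2 n le_rfl
      have e : h n * (derivative (derivative (h k)) - C 2 * (X * derivative (h k)))
          = h n * derivative (derivative (h k)) - C 2 * (X * (h n * derivative (h k))) := by ring
      rw [e, gint_sub] at h3
      exact h3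
    rw [gint_Cmul] at ibp1 ibp2 orth2
    rw [e1, gint_add, gint_sub, gint_Cmul, gint_Cmul, horthI k n (by omega), mul_zero, add_zero]
    linarith [ibp1, ibp2, orth2]
  have hR0 : R = 0 := eq_zero_of_orth hmonic hdeg horthI n R hRdeg horthR
  rw [hR] at hR0
  linear_combination hR0
lemma hasDerivAt_shift (p : Polynomial ℝ) (s x : ℝ) :
    HasDerivAt (fun z => p.eval (z - s)) ((derivative p).eval (x - s)) x := by
  have h1 := (p.hasDerivAt (x - s)).comp x ((hasDerivAt_id x).sub_const s)
  have h2 : HasDerivAt (fun z => p.eval (z - s)) _ x := h1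
  simpa using h2

lemma hasDerivAt_xshift (p : Polynomial ℝ) (s x : ℝ) :
    HasDerivAt (fun z => z * p.eval (z - s))
      ((p.eval (x - s)) + x * (derivative p).eval (x - s)) x := by
  have h2 : HasDerivAt (fun z => z * p.eval (z - s)) _ x := (hasDerivAt_id x).mul (hasDerivAt_shift p s x)
  simpa using h2



end Aux

/-- The 2×2 Hermite-type polynomials `Qₙ` are eigenfunctions of the second-order
differential operator
`D = ∂² I + ∂ [[−2x+2b, 2ax(c−b)+2a], [0, −2x+2c]] + [[−2, 2ac], [0, 0]]`
with eigenvalue `diag(−2n−2, −2n)`. -/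
theorem QHer_eigenfunction
    (b c : ℝ) (a : ℝ) (ha : a ≠ 0)
    (h : ℕ → Polynomial ℝ)
    (hmonic : ∀ n, (h n).Monic) (hdeg : ∀ n, (h n).natDegree = n)
    (horth : ∀ n m : ℕ, n ≠ m →
      ∫ x : ℝ, (h n).eval x * (h m).eval x * Real.exp (-x ^ 2) = 0) :
    ∀ (n : ℕ) (x : ℝ),
      (Matrix.of fun i j : Fin 2 =>
          deriv (fun y => deriv (fun z => QHer b c a h n z i j) y) x)
      + (Matrix.of fun i j : Fin 2 =>
          deriv (fun y => QHer b c a h n y i j) x) *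
          !![-2 * x + 2 * b, 2 * a * x * (c - b) + 2 * a; 0, -2 * x + 2 * c]
      + QHer b c a h n x * !![-2, 2 * a * c; 0, 0]
      = !![-2 * (n : ℝ) - 2, 0; 0, -2 * (n : ℝ)] * QHer b c a h n x := by
  have horthI : ∀ n m : ℕ, n ≠ m → gint (h n * h m) = 0 := by
    intro n m hnm
    have := horth n m hnm
    unfold gint
    simpa only [eval_mul, mul_assoc] using (by simpa only [mul_assoc] using this)
  have hodeP := hermite_ode hmonic hdeg horthI
  have hode : ∀ (m : ℕ) (t : ℝ), (derivative (derivative (h m))).eval t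
      = 2 * (t * (derivative (h m)).eval t) - 2 * (m : ℝ) * (h m).eval t := by
    intro m t
    rw [hodeP m]
    simp [eval_sub, eval_mul]
  intro n x
  have hcast : (n : ℝ) * ((n - 1 : ℕ) : ℝ) = (n : ℝ) * ((n : ℝ) - 1) := by
    rcases n with _ | m
    · simp
    · push_cast [Nat.add_sub_cancel]; ring
  -- first derivatives
  have d11 : (deriv fun z => (h n).eval (z - b)) = fun y => (derivative (h n)).eval (y - b) :=
    funext fun y => (hasDerivAt_shift (h n) b y).deriv
  have d12 : (deriv fun z => a * ((h (n + 1)).eval (z - c) - z * (h n).eval (z - b)))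
      = fun y => a * ((derivative (h (n + 1))).eval (y - c)
          - ((h n).eval (y - b) + y * (derivative (h n)).eval (y - b))) :=
    funext fun y =>
      (((hasDerivAt_shift (h (n + 1)) c y).sub (hasDerivAt_xshift (h n) b y)).const_mul a).deriv
  have dshift : ∀ (p : Polynomial ℝ) (s : ℝ),
      (deriv fun z => p.eval (z - s)) = fun y => (derivative p).eval (y - s) :=
    fun p s => funext fun y => (hasDerivAt_shift p s y).deriv
  have d21 : (deriv fun z => -(a * ((n:ℝ) / 2) * Real.exp (c ^ 2 - b ^ 2)
        * (h (n - 1)).eval (z - b)))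
      = fun y => -(a * ((n:ℝ) / 2) * Real.exp (c ^ 2 - b ^ 2)
        * (derivative (h (n - 1))).eval (y - b)) :=
    funext fun y => (((hasDerivAt_shift (h (n-1)) b y).const_mul _).neg).deriv
  have e22 : (fun z => a ^ 2 * ((n:ℝ) / 2) * Real.exp (c ^ 2 - b ^ 2) * z
        * (h (n - 1)).eval (z - b) + (h n).eval (z - c))
      = fun z => a ^ 2 * ((n:ℝ) / 2) * Real.exp (c ^ 2 - b ^ 2)
        * (z * (h (n - 1)).eval (z - b)) + (h n).eval (z - c) := by
    funext z; ring
  have d22 : (deriv fun z => a ^ 2 * ((n:ℝ) / 2) * Real.exp (c ^ 2 - b ^ 2)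
        * (z * (h (n - 1)).eval (z - b)) + (h n).eval (z - c))
      = fun y => a ^ 2 * ((n:ℝ) / 2) * Real.exp (c ^ 2 - b ^ 2)
        * ((h (n - 1)).eval (y - b) + y * (derivative (h (n - 1))).eval (y - b))
        + (derivative (h n)).eval (y - c) :=
    funext fun y => (((hasDerivAt_xshift (h (n-1)) b y).const_mul _).add
      (hasDerivAt_shift (h n) c y)).deriv
  have d12' : (deriv fun z => (h (n + 1)).eval (z - c) - z * (h n).eval (z - b))
      = fun y => (derivative (h (n + 1))).eval (y - c)
          - ((h n).eval (y - b) + y * (derivative (h n)).eval (y - b)) :=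
    funext fun y =>
      ((hasDerivAt_shift (h (n + 1)) c y).sub (hasDerivAt_xshift (h n) b y)).deriv
  have dd12' : deriv (fun y => (derivative (h (n + 1))).eval (y - c)
        - ((h n).eval (y - b) + y * (derivative (h n)).eval (y - b))) x
      = (derivative (derivative (h (n + 1)))).eval (x - c)
        - ((derivative (h n)).eval (x - b) + ((derivative (h n)).eval (x - b)
          + x * (derivative (derivative (h n))).eval (x - b))) :=
    ((hasDerivAt_shift (derivative (h (n+1))) c x).sub
      ((hasDerivAt_shift (h n) b x).add (hasDerivAt_xshift (derivative (h n)) b x))).deriv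
  have dd12 : deriv (fun y => a * ((derivative (h (n + 1))).eval (y - c)
        - ((h n).eval (y - b) + y * (derivative (h n)).eval (y - b)))) x
      = a * ((derivative (derivative (h (n + 1)))).eval (x - c)
        - ((derivative (h n)).eval (x - b) + ((derivative (h n)).eval (x - b)
          + x * (derivative (derivative (h n))).eval (x - b)))) :=
    (((hasDerivAt_shift (derivative (h (n+1))) c x).sub
      ((hasDerivAt_shift (h n) b x).add (hasDerivAt_xshift (derivative (h n)) b x))).const_mul a).deriv
  have dd21 : deriv (fun y => -(a * ((n:ℝ) / 2) * Real.exp (c ^ 2 - b ^ 2)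
        * (derivative (h (n - 1))).eval (y - b))) x
      = -(a * ((n:ℝ) / 2) * Real.exp (c ^ 2 - b ^ 2)
        * (derivative (derivative (h (n - 1)))).eval (x - b)) :=
    (((hasDerivAt_shift (derivative (h (n-1))) b x).const_mul _).neg).deriv
  have dd22 : deriv (fun y => a ^ 2 * ((n:ℝ) / 2) * Real.exp (c ^ 2 - b ^ 2)
        * ((h (n - 1)).eval (y - b) + y * (derivative (h (n - 1))).eval (y - b))
        + (derivative (h n)).eval (y - c)) x
      = a ^ 2 * ((n:ℝ) / 2) * Real.exp (c ^ 2 - b ^ 2)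
        * ((derivative (h (n - 1))).eval (x - b) + ((derivative (h (n - 1))).eval (x - b)
          + x * (derivative (derivative (h (n - 1)))).eval (x - b)))
        + (derivative (derivative (h n))).eval (x - c) :=
    ((((hasDerivAt_shift (h (n-1)) b x).add
        (hasDerivAt_xshift (derivative (h (n-1))) b x)).const_mul _).add
      (hasDerivAt_shift (derivative (h n)) c x)).deriv
  ext i j
  fin_cases i <;> fin_cases j <;>
    simp [QHer, Matrix.mul_apply, Fin.sum_univ_two, -deriv_sub, -deriv_add, -deriv_mul,
      -deriv_const_mul_field, -deriv_const_mul] <;>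
    simp only [e22, d11, d12, d21, d22, d12', dshift, dd12, dd21, dd22, dd12']
  · linear_combination hode n (x - b)
  · have hcast1 : ((n + 1 : ℕ) : ℝ) = (n : ℝ) + 1 := by push_cast; ring
    linear_combination a * hode (n + 1) (x - c) - a * x * hode n (x - b)
      - 2 * a * (h (n + 1)).eval (x - c) * hcast1
  · linear_combination (-(a * ((n:ℝ) / 2) * Real.exp (c ^ 2 - b ^ 2))) * hode (n - 1) (x - b)
      + (a * Real.exp (c ^ 2 - b ^ 2) * (h (n - 1)).eval (x - b)) * hcast
  · linear_combination (a ^ 2 * ((n:ℝ) / 2) * Real.exp (c ^ 2 - b ^ 2) * x) * hode (n - 1) (x - b)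
      + hode n (x - c)
      - (a ^ 2 * Real.exp (c ^ 2 - b ^ 2) * x * (h (n - 1)).eval (x - b)) * hcast

end
end
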